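/- arXiv:math/0610170 — 2 statements merged into one kernel-verified Lean document; each statement's English description precedes it below -/
import Mathlib

section
/- Let (X,d) be a metric space and u : X → ℝ a Lipschitz function. Define |∇u|(x) = limsup_{y→x} |u(x)−u(y)|/d(x,y) for non-isolated x and 0 for isolated x. Then |∇u| is an upper gradient of u: for every path γ : [0,l] → X parametrized proportionally to arclength, |u(γ(l)) − u(γ(0))| ≤ ∫_0^l |∇u|(γ(t)) dt. -/
open Metric MeasureTheory Set Filter Topology
open scoped ENNReal NNReal Classical

/-- The pointwise Lipschitz constant `|∇u|(x) = limsup_{y → x} |u x - u y| / d(x,y)`,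
set to `0` at isolated points. -/
noncomputable def nablaAbs {X : Type*} [MetricSpace X] (u : X → ℝ) (x : X) : ℝ :=
  if (𝓝[≠] x).NeBot then
    Filter.limsup (fun y => |u x - u y| / dist x y) (𝓝[≠] x)
  else 0

section helpers
variable {X : Type*} [MetricSpace X]

/-- The ratio `|u x - u y| / d(x,y)` as an `ℝ≥0∞`-valued function, cut off outside the
punctured ball of radius `q` around `x`. -/
noncomputable def ratE (u : X → ℝ) (q : ℝ) (y x : X) : ℝ≥0∞ :=
  if dist x y < q ∧ x ≠ y then ENNReal.ofReal (|u x - u y| / dist x y) else 0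

lemma lsc_ratE {u : X → ℝ} (hu : Continuous u) (q : ℝ) (y : X) :
    LowerSemicontinuous fun x => ratE u q y x := by
  intro x c hc
  simp only [ratE] at hc
  split_ifs at hc with h
  · have hopen : IsOpen {x' : X | dist x' y < q ∧ x' ≠ y} :=
      (isOpen_lt (continuous_id.dist continuous_const) continuous_const).inter isOpen_ne
    have hcont : ContinuousAt (fun x' => ENNReal.ofReal (|u x' - u y| / dist x' y)) x := by
      apply ENNReal.continuous_ofReal.continuousAt.comp
      exact ContinuousAt.div ((hu.sub continuous_const).abs).continuousAt
        (continuous_id.dist continuous_const).continuousAt (dist_ne_zero.mpr h.2)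
    have h1 : ∀ᶠ x' in 𝓝 x, x' ∈ {x' : X | dist x' y < q ∧ x' ≠ y} :=
      hopen.eventually_mem h
    have h2 : ∀ᶠ x' in 𝓝 x, c < ENNReal.ofReal (|u x' - u y| / dist x' y) :=
      hcont.eventually_mem (isOpen_Ioi.mem_nhds hc)
    filter_upwards [h1, h2] with x' hx1 hx2
    simpa only [ratE, if_pos hx1] using hx2
  · exact absurd hc (by simp)

/-- A measurable version of `nablaAbs` (with values in `ℝ≥0∞`). -/
noncomputable def nablaE (u : X → ℝ) (x : X) : ℝ≥0∞ :=
  ⨅ (q : ℚ) (_ : 0 < q), ⨆ y, ratE u q y x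

lemma meas_nablaE [MeasurableSpace X] [OpensMeasurableSpace X] {u : X → ℝ}
    (hu : Continuous u) : Measurable (nablaE u) :=
  Measurable.iInf fun q => Measurable.iInf fun _ =>
    (lowerSemicontinuous_iSup fun y => lsc_ratE hu q y).measurable

lemma rat_nonneg (u : X → ℝ) (x y : X) : 0 ≤ |u x - u y| / dist x y :=
  div_nonneg (abs_nonneg _) dist_nonneg

lemma rat_le {u : X → ℝ} {K : ℝ≥0} (hu : LipschitzWith K u) (x y : X) :
    |u x - u y| / dist x y ≤ K := by
  rcases eq_or_ne x y with rfl | h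
  · simp
  · rw [div_le_iff₀ (dist_pos.mpr h)]
    have := hu.dist_le_mul x y
    rwa [Real.dist_eq] at this

lemma nablaAbs_nonneg {u : X → ℝ} {K : ℝ≥0} (hu : LipschitzWith K u) (x : X) :
    0 ≤ nablaAbs u x := by
  rw [nablaAbs]
  split_ifs with h
  · exact le_limsup_of_frequently_le (Eventually.of_forall (rat_nonneg u x)).frequently
      (isBoundedUnder_of ⟨(K : ℝ), rat_le hu x⟩)
  · exact le_refl _

lemma nablaAbs_le {u : X → ℝ} {K : ℝ≥0} (hu : LipschitzWith K u) (x : X) :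
    nablaAbs u x ≤ K := by
  rw [nablaAbs]
  split_ifs with h
  · exact limsup_le_of_le (isCoboundedUnder_le_of_le _ (rat_nonneg u x))
      (Eventually.of_forall (rat_le hu x))
  · exact K.2

lemma sup_ratE_eq (u : X → ℝ) (q : ℝ) (x : X) :
    (⨆ y, ratE u q y x)
      = ⨆ y ∈ ball x q ∩ {x}ᶜ, ENNReal.ofReal (|u x - u y| / dist x y) := by
  apply le_antisymm
  · refine iSup_le fun y => ?_
    rw [ratE]; split_ifs with h
    · refine le_iSup₂ (f := fun y (_ : y ∈ ball x q ∩ {x}ᶜ) =>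
        ENNReal.ofReal (|u x - u y| / dist x y)) y ?_
      exact ⟨by rw [mem_ball, dist_comm]; exact h.1, fun hy => h.2 (hy.symm)⟩
    · exact zero_le
  · refine iSup₂_le fun y hy => ?_
    have hc : dist x y < q ∧ x ≠ y :=
      ⟨by rw [dist_comm]; exact mem_ball.mp hy.1, fun hxy => hy.2 (hxy.symm)⟩
    calc ENNReal.ofReal (|u x - u y| / dist x y) = ratE u q y x := by rw [ratE, if_pos hc]
    _ ≤ _ := le_iSup (fun y => ratE u q y x) y

lemma sup_ratE_mono (u : X → ℝ) (x : X) {a b : ℝ} (hab : a ≤ b) :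
    (⨆ y, ratE u a y x) ≤ ⨆ y, ratE u b y x := by
  refine iSup_mono fun y => ?_
  rw [ratE, ratE]
  split_ifs with h1 h2
  · exact le_rfl
  · exact absurd ⟨h1.1.trans_le hab, h1.2⟩ h2
  · exact zero_le
  · exact le_rfl

lemma nablaE_eq {u : X → ℝ} {K : ℝ≥0} (hu : LipschitzWith K u) (x : X) :
    ENNReal.ofReal (nablaAbs u x) = nablaE u x := by
  have hbasis := nhdsWithin_hasBasis (nhds_basis_ball (x := x)) {x}ᶜ
  by_cases h : (𝓝[≠] x).NeBot
  · haveI := h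
    rw [nablaAbs, if_pos h]
    have h1 : ENNReal.ofReal (limsup (fun y => |u x - u y| / dist x y) (𝓝[≠] x))
        = limsup (fun y => ENNReal.ofReal (|u x - u y| / dist x y)) (𝓝[≠] x) :=
      Monotone.map_limsup_of_continuousAt (f := ENNReal.ofReal)
        (fun _ _ hab => ENNReal.ofReal_le_ofReal hab) _
        ENNReal.continuous_ofReal.continuousAt
        (isBoundedUnder_of ⟨(K : ℝ), rat_le hu x⟩)
        (isCoboundedUnder_le_of_le _ (rat_nonneg u x))
    rw [h1, hbasis.limsup_eq_iInf_iSup]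
    simp_rw [← sup_ratE_eq]
    rw [nablaE]
    apply le_antisymm
    · exact le_iInf₂ fun q hq => iInf₂_le (q : ℝ) (by exact_mod_cast hq)
    · refine le_iInf₂ fun ε hε => ?_
      obtain ⟨q, hq0, hqε⟩ := exists_rat_btwn hε
      exact (iInf₂_le q (by exact_mod_cast hq0)).trans (sup_ratE_mono u x hqε.le)
  · rw [nablaAbs, if_neg h, ENNReal.ofReal_zero]
    rw [Filter.not_neBot] at h
    have hmem : (∅ : Set X) ∈ 𝓝[≠] x := by rw [h]; exact mem_bot
    obtain ⟨ε, hε, hsub⟩ := hbasis.mem_iff.mp hmem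
    obtain ⟨q, hq0, hqε⟩ := exists_rat_btwn hε
    have hq : (⨆ y, ratE u q y x) = 0 := by
      refine le_antisymm (iSup_le fun y => ?_) (zero_le)
      rw [ratE]
      split_ifs with hc
      · exact absurd (hsub ⟨by rw [mem_ball, dist_comm]; exact hc.1.trans hqε,
          fun hy => hc.2 hy.symm⟩) (notMem_empty y)
      · exact le_rfl
    refine (le_antisymm ?_ (zero_le)).symm
    rw [nablaE]
    exact (iInf₂_le q (by exact_mod_cast hq0)).trans hq.le

/-- Key pointwise estimate: small increments of `u ∘ γ` are controlled by `nablaAbs`. -/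
lemma key_pointwise {u : X → ℝ} {K : ℝ≥0} (hu : LipschitzWith K u)
    {l : ℝ} {γ : ℝ → X}
    (hγ : ∀ s ∈ Icc 0 l, ∀ t ∈ Icc 0 l, dist (γ s) (γ t) ≤ |s - t|)
    {t : ℝ} (ht : t ∈ Ico 0 l) {ε : ℝ} (hε : 0 < ε) :
    ∃ r0 > 0, ∀ δ : ℝ, 0 < δ → δ < min r0 (l - t) →
      |u (γ (t + δ)) - u (γ t)| ≤ (nablaAbs u (γ t) + ε) * δ := by
  set x := γ t with hx
  have hbasis := nhdsWithin_hasBasis (nhds_basis_ball (x := x)) {x}ᶜ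
  have hL0 : 0 ≤ nablaAbs u x := nablaAbs_nonneg hu x
  have htmem : t ∈ Icc 0 l := ⟨ht.1, ht.2.le⟩
  by_cases h : (𝓝[≠] x).NeBot
  · haveI := h
    have hlt : limsup (fun y => |u x - u y| / dist x y) (𝓝[≠] x) < nablaAbs u x + ε := by
      rw [nablaAbs, if_pos h]; linarith
    have hev : ∀ᶠ y in 𝓝[≠] x, |u x - u y| / dist x y < nablaAbs u x + ε :=
      eventually_lt_of_limsup_lt hlt (isBoundedUnder_of ⟨(K : ℝ), rat_le hu x⟩)
    obtain ⟨r0, hr0, hball⟩ := hbasis.eventually_iff.mp hev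
    refine ⟨r0, hr0, fun δ hδ hδlt => ?_⟩
    have hδr0 : δ < r0 := hδlt.trans_le (min_le_left _ _)
    have htδ : t + δ ∈ Icc 0 l :=
      ⟨by linarith [ht.1], by have := hδlt.trans_le (min_le_right _ _); linarith⟩
    set y := γ (t + δ) with hy
    have hdist : dist y x ≤ δ := by
      have := hγ (t + δ) htδ t htmem
      rwa [show t + δ - t = δ by ring, abs_of_pos hδ] at this
    rcases eq_or_ne y x with hyx | hyx
    · rw [hyx]
      simpa using mul_nonneg (by linarith) hδ.le
    · have hmem : y ∈ ball x r0 ∩ {x}ᶜ :=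
        ⟨mem_ball.mpr (hdist.trans_lt hδr0), hyx⟩
      have hr : |u x - u y| / dist x y < nablaAbs u x + ε := hball hmem
      have hdpos : 0 < dist x y := dist_pos.mpr (Ne.symm hyx)
      have h1 : |u x - u y| < (nablaAbs u x + ε) * dist x y := by
        rwa [div_lt_iff₀ hdpos] at hr
      have h2 : (nablaAbs u x + ε) * dist x y ≤ (nablaAbs u x + ε) * δ := by
        apply mul_le_mul_of_nonneg_left _ (by linarith)
        rwa [dist_comm]
      rw [abs_sub_comm]
      exact (h1.trans_le h2).le
  · have hbot : (𝓝[≠] x) = ⊥ := Filter.not_neBot.mp h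
    have hmem : (∅ : Set X) ∈ 𝓝[≠] x := by rw [hbot]; exact mem_bot
    obtain ⟨r0, hr0, hsub⟩ := hbasis.mem_iff.mp hmem
    refine ⟨r0, hr0, fun δ hδ hδlt => ?_⟩
    have hδr0 : δ < r0 := hδlt.trans_le (min_le_left _ _)
    have htδ : t + δ ∈ Icc 0 l :=
      ⟨by linarith [ht.1], by have := hδlt.trans_le (min_le_right _ _); linarith⟩
    have hdist : dist (γ (t + δ)) x ≤ δ := by
      have := hγ (t + δ) htδ t htmem
      rwa [show t + δ - t = δ by ring, abs_of_pos hδ] at this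
    have hyx : γ (t + δ) = x := by
      by_contra hne
      exact notMem_empty _ (hsub ⟨mem_ball.mpr (hdist.trans_lt hδr0), hne⟩)
    rw [hyx]
    simpa using mul_nonneg (by linarith) hδ.le

end helpers

/-- For a Lipschitz function `u`, `|∇u|` is an upper gradient: for every path `γ` on
`[0,l]` parametrized proportionally to arclength (1-Lipschitz of length `l`),
`|u(γ l) - u(γ 0)| ≤ ∫₀ˡ |∇u|(γ t) dt`. -/
theorem nablaAbs_upperGradient {X : Type*} [MetricSpace X]
    (u : X → ℝ) (K : ℝ≥0) (hu : LipschitzWith K u)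
    (l : ℝ) (hl : 0 ≤ l) (γ : ℝ → X) (hγ : LipschitzOnWith 1 γ (Set.Icc 0 l))
    (hlen : eVariationOn γ (Set.Icc 0 l) = ENNReal.ofReal l) :
    |u (γ l) - u (γ 0)| ≤ ∫ t in (0:ℝ)..l, nablaAbs u (γ t) := by
  borelize X
  clear hlen
  rcases eq_or_lt_of_le hl with rfl | hl'
  · simp
  -- the path is 1-Lipschitz in the usual metric sense
  have hγd : ∀ s ∈ Icc (0:ℝ) l, ∀ t ∈ Icc (0:ℝ) l, dist (γ s) (γ t) ≤ |s - t| := by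
    intro s hs t ht
    have := (lipschitzOnWith_iff_dist_le_mul.mp hγ) s hs t ht
    simpa [Real.dist_eq] using this
  -- projection onto [0,l] and the extended function F
  set proj : ℝ → ℝ := fun t => max (min t l) 0 with hproj
  have hproj_mem : ∀ t, proj t ∈ Icc (0:ℝ) l := fun t =>
    ⟨le_max_right _ _, max_le (min_le_right _ _) hl⟩
  have hproj_eq : ∀ t ∈ Icc (0:ℝ) l, proj t = t := fun t ht => by
    simp only [hproj, min_eq_left ht.2, max_eq_left ht.1]
  have hproj_lip : ∀ a b, |proj a - proj b| ≤ |a - b| := by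
    intro a b
    refine (abs_max_sub_max_le_abs _ _ _).trans ?_
    have := abs_min_sub_min_le_max a l b l
    simpa [sub_self, abs_zero, max_eq_left (abs_nonneg (a - b))] using this
  set F : ℝ → ℝ := fun t => u (γ (proj t)) with hF
  have hFd : ∀ a b, |F a - F b| ≤ K * |a - b| := by
    intro a b
    have h1 : dist (u (γ (proj a))) (u (γ (proj b))) ≤ K * dist (γ (proj a)) (γ (proj b)) :=
      hu.dist_le_mul _ _
    rw [Real.dist_eq] at h1
    calc |F a - F b| ≤ K * dist (γ (proj a)) (γ (proj b)) := h1
    _ ≤ K * |proj a - proj b| :=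
      mul_le_mul_of_nonneg_left (hγd _ (hproj_mem a) _ (hproj_mem b)) K.coe_nonneg
    _ ≤ K * |a - b| := mul_le_mul_of_nonneg_left (hproj_lip a b) K.coe_nonneg
  have hFcont : Continuous F := by
    apply LipschitzWith.continuous (K := K)
    apply LipschitzWith.of_dist_le_mul
    intro a b; rw [Real.dist_eq, Real.dist_eq]; exact hFd a b
  have hFl : F l = u (γ l) := by rw [hF]; simp only [hproj_eq l ⟨hl, le_rfl⟩]
  have hF0 : F 0 = u (γ 0) := by rw [hF]; simp only [hproj_eq 0 ⟨le_rfl, hl⟩]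
  -- the sequence of step sizes
  set δ : ℕ → ℝ := fun n => 1 / (n + 1) with hδdef
  have hδpos : ∀ n, 0 < δ n := fun n => by positivity
  have hδ0 : Tendsto δ atTop (𝓝 0) := tendsto_one_div_add_atTop_nhds_zero_nat
  -- difference quotients
  set G : ℕ → ℝ → ℝ := fun n t => |F (t + δ n) - F t| / δ n with hG
  have hGnn : ∀ n t, 0 ≤ G n t := fun n t => div_nonneg (abs_nonneg _) (hδpos n).le
  have hGle : ∀ n t, G n t ≤ K := fun n t => by
    rw [hG]
    simp only
    rw [div_le_iff₀ (hδpos n)]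
    calc |F (t + δ n) - F t| ≤ K * |t + δ n - t| := hFd _ _
    _ = K * δ n := by rw [show t + δ n - t = δ n by ring, abs_of_pos (hδpos n)]
  have hGcont : ∀ n, Continuous (G n) := fun n =>
    (((hFcont.comp (continuous_id.add continuous_const)).sub hFcont).abs).div_const _
  have hint : ∀ a b : ℝ, IntervalIntegrable F volume a b := fun a b =>
    hFcont.intervalIntegrable a b
  -- the averaged increments
  set A : ℕ → ℝ := fun n => ((∫ s in l..(l + δ n), F s) - ∫ s in (0:ℝ)..(δ n), F s) / δ n
    with hA
  have hAeq : ∀ n, A n = (∫ t in (0:ℝ)..l, (F (t + δ n) - F t)) / δ n := by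
    intro n
    rw [hA]
    simp only
    congr 1
    have hc1 : Continuous fun t : ℝ => F (t + δ n) := by fun_prop
    rw [intervalIntegral.integral_sub (hc1.intervalIntegrable _ _)
      (hint _ _), intervalIntegral.integral_comp_add_right (fun s => F s) (δ n)]
    have e1 := intervalIntegral.integral_add_adjacent_intervals (hint (0 + δ n) l)
      (hint l (l + δ n))
    have e2 := intervalIntegral.integral_add_adjacent_intervals (hint 0 (δ n))
      (hint (δ n) l)
    simp only [zero_add] at e1 ⊢
    linarith
  have hAbound : ∀ n, |A n| ≤ ∫ t in (0:ℝ)..l, G n t := by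
    intro n
    rw [hAeq n]
    simp only [hG]
    rw [abs_div, abs_of_pos (hδpos n), intervalIntegral.integral_div]
    gcongr
    exact intervalIntegral.abs_integral_le_integral_abs hl
  -- A n → F l - F 0
  have hAt : Tendsto A atTop (𝓝 (F l - F 0)) := by
    rw [← tendsto_sub_nhds_zero_iff, tendsto_zero_iff_abs_tendsto_zero]
    have hend : ∀ (c : ℝ) (n : ℕ), |(∫ s in c..(c + δ n), F s) / δ n - F c| ≤ K * δ n := by
      intro c n
      have e : (∫ s in c..(c + δ n), F s) - δ n * F c = ∫ s in c..(c + δ n), (F s - F c) := by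
        rw [intervalIntegral.integral_sub (hint _ _) intervalIntegrable_const,
          intervalIntegral.integral_const, smul_eq_mul]
        ring_nf
      have hb : ‖∫ s in c..(c + δ n), (F s - F c)‖ ≤ (K * δ n) * |c + δ n - c| := by
        apply intervalIntegral.norm_integral_le_of_norm_le_const
        intro s hs
        rw [Set.uIoc_of_le (by linarith [hδpos n])] at hs
        rw [Real.norm_eq_abs]
        calc |F s - F c| ≤ K * |s - c| := hFd _ _
        _ ≤ K * δ n := by
            apply mul_le_mul_of_nonneg_left _ K.coe_nonneg
            rw [abs_of_pos (by linarith [hs.1] : (0:ℝ) < s - c)]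
            linarith [hs.2]
      rw [Real.norm_eq_abs] at hb
      rw [show (∫ s in c..(c + δ n), F s) / δ n - F c
        = ((∫ s in c..(c + δ n), F s) - δ n * F c) / δ n by rw [sub_div, mul_div_cancel_left₀ _ (hδpos n).ne']]
      rw [e, abs_div, abs_of_pos (hδpos n), div_le_iff₀ (hδpos n)]
      calc |∫ s in c..(c + δ n), (F s - F c)| ≤ (K * δ n) * |c + δ n - c| := hb
      _ = K * δ n * δ n := by rw [show c + δ n - c = δ n by ring, abs_of_pos (hδpos n)]
    have hbound : ∀ n, |A n - (F l - F 0)| ≤ 2 * K * δ n := by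
      intro n
      have h1 := hend l n
      have h2 := hend 0 n
      have : A n - (F l - F 0)
          = ((∫ s in l..(l + δ n), F s) / δ n - F l)
            - ((∫ s in (0:ℝ)..(0 + δ n), F s) / δ n - F 0) := by
        rw [hA]; simp only [zero_add]; field_simp; ring
      rw [this]
      calc |_ - _| ≤ |(∫ s in l..(l + δ n), F s) / δ n - F l|
          + |(∫ s in (0:ℝ)..(0 + δ n), F s) / δ n - F 0| := abs_sub _ _
      _ ≤ K * δ n + K * δ n := add_le_add h1 h2
      _ = 2 * K * δ n := by ring
    have htend : Tendsto (fun n => 2 * (K:ℝ) * δ n) atTop (𝓝 0) := by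
      have h2 : Tendsto (fun n : ℕ => 2 * (K:ℝ) * δ n) atTop (𝓝 (2 * (K:ℝ) * 0)) :=
        hδ0.const_mul _
      simpa using h2
    exact squeeze_zero (fun n => abs_nonneg _) hbound htend
  -- measurability and integrability of nablaAbs ∘ γ on (0, l]
  have hγae : AEMeasurable γ (volume.restrict (Ioc 0 l)) :=
    (hγ.continuousOn.aemeasurable measurableSet_Icc).mono_measure
      (Measure.restrict_mono Ioc_subset_Icc_self le_rfl)
  have hgae : AEMeasurable (fun t => nablaAbs u (γ t)) (volume.restrict (Ioc 0 l)) := by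
    have heq : (fun t => nablaAbs u (γ t)) = fun t => (nablaE u (γ t)).toReal := by
      funext t
      rw [← nablaE_eq hu (γ t), ENNReal.toReal_ofReal (nablaAbs_nonneg hu _)]
    rw [heq]
    exact ((meas_nablaE hu.continuous).comp_aemeasurable hγae).ennreal_toReal
  haveI : IsFiniteMeasure (volume.restrict (Ioc (0:ℝ) l)) := by
    constructor
    rw [Measure.restrict_apply_univ, Real.volume_Ioc]
    exact ENNReal.ofReal_lt_top
  have hgint : IntegrableOn (fun t => nablaAbs u (γ t)) (Ioc 0 l) := by
    constructor
    · exact hgae.aestronglyMeasurable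
    · apply HasFiniteIntegral.of_bounded (C := (K:ℝ))
      refine ae_of_all _ fun t => ?_
      rw [Real.norm_eq_abs, abs_of_nonneg (nablaAbs_nonneg hu _)]
      exact nablaAbs_le hu _
  -- pointwise limsup bound
  have hpoint : ∀ t ∈ Ioc (0:ℝ) l,
      limsup (fun n => ENNReal.ofReal (G n t)) atTop ≤ nablaE u (γ t) := by
    intro t ht
    rw [← nablaE_eq hu (γ t)]
    by_cases htl : t = l
    · subst htl
      have hz : ∀ n, G n t = 0 := by
        intro n
        rw [hG]
        simp only
        have : proj (t + δ n) = t := by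
          rw [hproj]
          simp only
          rw [min_eq_right (by linarith [hδpos n]), max_eq_left hl]
        rw [hF]
        simp only [this, hproj_eq t ⟨hl, le_rfl⟩, sub_self, abs_zero, zero_div]
      simp only [hz, ENNReal.ofReal_zero]
      rw [limsup_const]
      exact zero_le
    · have ht' : t ∈ Ico (0:ℝ) l := ⟨ht.1.le, lt_of_le_of_ne ht.2 htl⟩
      apply ENNReal.le_of_forall_pos_le_add
      intro ε hε _
      obtain ⟨r0, hr0, hkey⟩ := key_pointwise hu hγd ht' (ε := (ε:ℝ)) (by exact_mod_cast hε)
      have hmin : (0:ℝ) < min r0 (l - t) := lt_min hr0 (by linarith [ht'.2])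
      have hev : ∀ᶠ n in atTop, δ n < min r0 (l - t) := hδ0.eventually_lt_const hmin
      refine limsup_le_of_le (by isBoundedDefault) ?_
      filter_upwards [hev] with n hn
      have hδn := hδpos n
      have h1 := hkey (δ n) hδn hn
      have htm2 : proj (t + δ n) = t + δ n := hproj_eq _
        ⟨by linarith [ht.1], by have := hn.trans_le (min_le_right _ _); linarith⟩
      have htm : proj t = t := hproj_eq t ⟨ht.1.le, ht.2⟩
      have hGb : G n t ≤ nablaAbs u (γ t) + ε := by
        rw [hG]
        simp only
        rw [hF]
        simp only [htm2, htm]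
        rw [div_le_iff₀ hδn]
        exact h1
      calc ENNReal.ofReal (G n t) ≤ ENNReal.ofReal (nablaAbs u (γ t) + ε) :=
        ENNReal.ofReal_le_ofReal hGb
      _ = ENNReal.ofReal (nablaAbs u (γ t)) + ENNReal.ofReal (ε:ℝ) :=
        ENNReal.ofReal_add (nablaAbs_nonneg hu _) ε.coe_nonneg
      _ = ENNReal.ofReal (nablaAbs u (γ t)) + ε := by rw [ENNReal.ofReal_coe_nnreal]
  -- the main chain of inequalities in ℝ≥0∞
  have chain : ENNReal.ofReal |F l - F 0|
      ≤ ENNReal.ofReal (∫ t in Ioc (0:ℝ) l, nablaAbs u (γ t)) := by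
    have c1 : Tendsto (fun n => ENNReal.ofReal |A n|) atTop
        (𝓝 (ENNReal.ofReal |F l - F 0|)) :=
      (ENNReal.continuous_ofReal.tendsto _).comp hAt.abs
    rw [← c1.limsup_eq]
    have c3 : limsup (fun n => ENNReal.ofReal |A n|) atTop
        ≤ limsup (fun n => ∫⁻ t in Ioc (0:ℝ) l, ENNReal.ofReal (G n t)) atTop := by
      refine limsup_le_limsup (Eventually.of_forall fun n => ?_)
      calc ENNReal.ofReal |A n| ≤ ENNReal.ofReal (∫ t in (0:ℝ)..l, G n t) :=
        ENNReal.ofReal_le_ofReal (hAbound n)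
      _ = ∫⁻ t in Ioc (0:ℝ) l, ENNReal.ofReal (G n t) := by
          rw [intervalIntegral.integral_of_le hl,
            ofReal_integral_eq_lintegral_ofReal ((hGcont n).integrableOn_Ioc)
              (ae_of_all _ fun t => hGnn n t)]
    have c4 : limsup (fun n => ∫⁻ t in Ioc (0:ℝ) l, ENNReal.ofReal (G n t)) atTop
        ≤ ∫⁻ t in Ioc (0:ℝ) l, limsup (fun n => ENNReal.ofReal (G n t)) atTop := by
      apply limsup_lintegral_le (g := fun _ => (K : ℝ≥0∞))
      · exact fun n => ((hGcont n).measurable).ennreal_ofReal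
      · intro n
        refine ae_of_all _ fun t => ?_
        rw [← ENNReal.ofReal_coe_nnreal]
        exact ENNReal.ofReal_le_ofReal (hGle n t)
      · rw [setLIntegral_const, Real.volume_Ioc]
        exact ENNReal.mul_ne_top ENNReal.coe_ne_top ENNReal.ofReal_ne_top
    have c5 : ∫⁻ t in Ioc (0:ℝ) l, limsup (fun n => ENNReal.ofReal (G n t)) atTop
        ≤ ∫⁻ t in Ioc (0:ℝ) l, nablaE u (γ t) :=
      lintegral_mono_ae ((ae_restrict_mem measurableSet_Ioc).mono hpoint)
    have c6 : ∫⁻ t in Ioc (0:ℝ) l, nablaE u (γ t)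
        = ENNReal.ofReal (∫ t in Ioc (0:ℝ) l, nablaAbs u (γ t)) := by
      have heq : ∀ t, nablaE u (γ t) = ENNReal.ofReal (nablaAbs u (γ t)) :=
        fun t => (nablaE_eq hu (γ t)).symm
      simp_rw [heq]
      exact (ofReal_integral_eq_lintegral_ofReal hgint
        (ae_of_all _ fun t => nablaAbs_nonneg hu _)).symm
    exact ((c3.trans c4).trans c5).trans_eq c6
  -- conclude
  rw [intervalIntegral.integral_of_le hl, ← hFl, ← hF0]
  have hnn : 0 ≤ ∫ t in Ioc (0:ℝ) l, nablaAbs u (γ t) :=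
    setIntegral_nonneg measurableSet_Ioc fun t _ => nablaAbs_nonneg hu _
  exact (ENNReal.ofReal_le_ofReal_iff hnn).mp chain
end

section
/- Let (X,d,μ) be a complete, locally compact length space with Borel measure satisfying 0 < μ(B_r(x)) < ∞ for all x, r, and satisfying a Poincaré inequality of type (1,p) for some 1 ≤ p < ∞. If a point x₀ ∈ X satisfies liminf_{r→0} μ(B_r(x₀))/r^p = 0, then x₀ is not a local cut point. -/
open Metric MeasureTheory Set Filter Topology
open scoped ENNReal NNReal

noncomputable def genSin (k t : ℝ) : ℝ :=
  if 0 < k then Real.sin (Real.sqrt k * t) / Real.sqrt k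
  else if k = 0 then t
  else Real.sinh (Real.sqrt (-k) * t) / Real.sqrt (-k)

/-- `V_{k,n}(r₁,r₂)`, the volume of an annulus in the model space. -/
noncomputable def Vkn (k n r₁ r₂ : ℝ) : ℝ :=
  (2 * Real.pi ^ (n / 2) / Real.Gamma (n / 2)) * ∫ t in r₁..r₂, genSin k t ^ (n - 1)

def IsLengthSpace (X : Type*) [MetricSpace X] : Prop :=
  ∀ x y : X, ∀ ε > 0, ∃ z : X, max (dist x z) (dist z y) ≤ dist x y / 2 + ε

variable {X : Type*} [MetricSpace X]

/-- The open annulus `A_{r₁,r₂}(x) = B_{r₂}(x) \ closure (B_{r₁}(x))`. -/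
def ann (x : X) (r₁ r₂ : ℝ) : Set X := Metric.ball x r₂ \ closure (Metric.ball x r₁)

/-- `S_{s₁,s₂}(x,U)`: points of the annulus `A_{s₁,s₂}(x)` lying on a minimal geodesic
from `x` to some point of `U`. -/
def geodSlice (x : X) (s₁ s₂ : ℝ) (U : Set X) : Set X :=
  {y | y ∈ ann x s₁ s₂ ∧ ∃ z ∈ U, dist x y + dist y z = dist x z}

/-- The generalized Bishop–Gromov inequality `BG(k,n)` with constant `C`. -/
def SatisfiesBG [MeasurableSpace X] (μ : Measure X) (k n C : ℝ) : Prop :=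
  ∀ (x : X) (r₁ r₂ s₁ s₂ : ℝ), 0 ≤ s₁ → s₁ < s₂ → s₁ ≤ r₁ → r₁ < r₂ → s₂ ≤ r₂ →
    ∀ U : Set X, MeasurableSet U → U ⊆ ann x r₁ r₂ →
      μ U * ENNReal.ofReal (Vkn k n s₁ s₂) ≤
        ENNReal.ofReal C * μ (geodSlice x s₁ s₂ U) * ENNReal.ofReal (Vkn k n r₁ r₂)

/-- A local cut point. -/
def IsLocalCutPoint (x : X) : Prop :=
  ∃ U : Set X, U ∈ 𝓝 x ∧ IsConnected U ∧ ¬ IsPreconnected (U \ {x})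

/-- The degree of a point: supremum over connected neighborhoods `U` of `x` of the
number of connected components of `U \ {x}`. -/
noncomputable def degree (x : X) : ℕ∞ :=
  ⨆ U : {U : Set X // U ∈ 𝓝 x ∧ IsConnected U},
    ENat.card (ConnectedComponents ↥(U.1 \ {x}))


/-- `g : X → [0,∞]` is an upper gradient of `u`: along every path parametrized
proportionally to arclength (1-Lipschitz on `[0,l]`),
`|u(γ l) - u(γ 0)| ≤ ∫₀ˡ g(γ t) dt`. -/
def IsUpperGradient (u : X → ℝ) (g : X → ℝ≥0∞) : Prop :=
  ∀ l : ℝ, 0 ≤ l → ∀ γ : ℝ → X, LipschitzOnWith 1 γ (Set.Icc 0 l) →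
    ENNReal.ofReal |u (γ l) - u (γ 0)| ≤ ∫⁻ t in Set.Icc (0:ℝ) l, g (γ t)

/-- The Poincaré inequality of type `(1,p)`. -/
def PoincareIneq [MeasurableSpace X] (μ : Measure X) (p : ℝ) : Prop :=
  ∀ R > 0, ∃ Cp > 0, ∀ (x : X) (r : ℝ), 0 < r → r ≤ R →
    ∀ u : X → ℝ, Measurable u → ∀ g : X → ℝ≥0∞, Measurable g → IsUpperGradient u g →
      ⨍⁻ y in Metric.ball x r, ENNReal.ofReal
          |u y - ⨍ z in Metric.ball x r, u z ∂μ| ∂μ ≤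
        ENNReal.ofReal (Cp * r) * (⨍⁻ y in Metric.ball x r, g y ^ p ∂μ) ^ (1/p)

section AuxNotCutPoint

lemma aux_induction {φ ψ : ℝ → ℝ} {s t : ℝ} (hst : s ≤ t)
    (hφ : ContinuousOn φ (Set.Icc s t)) (hψc : Continuous ψ) (hψm : Monotone ψ)
    (H : ∀ τ ∈ Set.Icc s t, ∃ δ > 0, ∀ β ∈ Set.Icc s t, τ ≤ β → β ≤ τ + δ →
      |φ β - φ τ| ≤ ψ β - ψ τ) :
    |φ t - φ s| ≤ ψ t - ψ s := by
  set T := {β | β ∈ Set.Icc s t ∧ |φ β - φ s| ≤ ψ β - ψ s} with hTdef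
  have hsT : s ∈ T := ⟨⟨le_refl s, hst⟩, by simp⟩
  have hTne : T.Nonempty := ⟨s, hsT⟩
  have hTbdd : BddAbove T := ⟨t, fun β hβ => hβ.1.2⟩
  have hTclosed : IsClosed T := by
    have h1 : ContinuousOn (fun β => |φ β - φ s| - (ψ β - ψ s)) (Set.Icc s t) := by
      apply ContinuousOn.sub
      · exact ((hφ.sub continuousOn_const).abs)
      · exact (hψc.continuousOn.sub continuousOn_const)
    have : T = Set.Icc s t ∩ (fun β => |φ β - φ s| - (ψ β - ψ s)) ⁻¹' Set.Iic 0 := by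
      ext β; simp only [hTdef, Set.mem_setOf_eq, Set.mem_inter_iff, Set.mem_preimage,
        Set.mem_Iic, and_congr_right_iff]
      intro _; constructor <;> intro h <;> linarith
    rw [this]
    exact h1.preimage_isClosed_of_isClosed isClosed_Icc isClosed_Iic
  have hmT := hTclosed.csSup_mem hTne hTbdd
  set m := sSup T with hm
  obtain ⟨hmIcc, hmineq⟩ := hmT
  rcases eq_or_lt_of_le hmIcc.2 with heq | hlt
  · rw [heq] at hmineq; exact hmineq
  · exfalso
    obtain ⟨δ, hδ, hH⟩ := H m hmIcc
    set β := min t (m + δ) with hβ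
    have hβIcc : β ∈ Set.Icc s t := ⟨le_min hst (le_trans hmIcc.1 (by linarith)), min_le_left _ _⟩
    have hβm : m ≤ β := le_min hlt.le (by linarith)
    have hβδ : β ≤ m + δ := min_le_right _ _
    have hβT : β ∈ T := by
      refine ⟨hβIcc, ?_⟩
      calc |φ β - φ s| ≤ |φ β - φ m| + |φ m - φ s| := abs_sub_le _ _ _
        _ ≤ (ψ β - ψ m) + (ψ m - ψ s) := add_le_add (hH β hβIcc hβm hβδ) hmineq
        _ = ψ β - ψ s := by ring
    have h1 : β ≤ m := le_csSup hTbdd hβT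
    have h2 : m < β := lt_min hlt (by linarith)
    linarith


lemma volf_mono {O : Set ℝ} (hfin : volume O ≠ ⊤) :
    Monotone (fun β : ℝ => (volume (O ∩ Set.Icc 0 β)).toReal) := by
  intro a b hab
  apply ENNReal.toReal_mono
  · exact ne_top_of_le_ne_top hfin (measure_mono inter_subset_left)
  · exact measure_mono (inter_subset_inter_right _ (Icc_subset_Icc le_rfl hab))

lemma volf_lip {O : Set ℝ} (hfin : volume O ≠ ⊤) :
    LipschitzWith 1 (fun β : ℝ => (volume (O ∩ Set.Icc 0 β)).toReal) := by
  have key : ∀ a b : ℝ, a ≤ b → (volume (O ∩ Set.Icc 0 b)).toReal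
      ≤ (volume (O ∩ Set.Icc 0 a)).toReal + (b - a) := by
    intro a b hab
    have h1 : O ∩ Set.Icc 0 b ⊆ (O ∩ Set.Icc 0 a) ∪ Set.Ioc a b := by
      rintro x ⟨hxO, hx0, hxb⟩
      rcases le_or_gt x a with h | h
      · exact Or.inl ⟨hxO, hx0, h⟩
      · exact Or.inr ⟨h, hxb⟩
    have h2 : volume (O ∩ Set.Icc 0 b) ≤ volume (O ∩ Set.Icc 0 a) + ENNReal.ofReal (b - a) := by
      calc volume (O ∩ Set.Icc 0 b) ≤ volume ((O ∩ Set.Icc 0 a) ∪ Set.Ioc a b) :=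
            measure_mono h1
        _ ≤ volume (O ∩ Set.Icc 0 a) + volume (Set.Ioc a b) := measure_union_le _ _
        _ = volume (O ∩ Set.Icc 0 a) + ENNReal.ofReal (b - a) := by rw [Real.volume_Ioc]
    have hfin1 : volume (O ∩ Set.Icc 0 a) ≠ ⊤ :=
      ne_top_of_le_ne_top hfin (measure_mono inter_subset_left)
    calc (volume (O ∩ Set.Icc 0 b)).toReal
        ≤ (volume (O ∩ Set.Icc 0 a) + ENNReal.ofReal (b - a)).toReal :=
          ENNReal.toReal_mono (by finiteness) h2
      _ = (volume (O ∩ Set.Icc 0 a)).toReal + (b - a) := by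
          rw [ENNReal.toReal_add hfin1 ENNReal.ofReal_ne_top, ENNReal.toReal_ofReal (by linarith)]
  apply LipschitzWith.of_dist_le_mul
  intro a b
  rw [Real.dist_eq, Real.dist_eq, NNReal.coe_one, one_mul]
  rcases le_total a b with h | h
  · rw [abs_sub_comm, abs_of_nonneg (sub_nonneg.2 (volf_mono hfin h)),
      abs_of_nonpos (by linarith)]
    have := key a b h; linarith
  · rw [abs_of_nonneg (sub_nonneg.2 (volf_mono hfin h)), abs_of_nonneg (by linarith)]
    have := key b a h; linarith

lemma volf_step {O : Set ℝ} (hO : MeasurableSet O) (hfin : volume O ≠ ⊤)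
    {τ β : ℝ} (hτ : 0 ≤ τ) (hτβ : τ ≤ β) (hsub : Set.Ioc τ β ⊆ O) :
    (volume (O ∩ Set.Icc 0 τ)).toReal + (β - τ)
      ≤ (volume (O ∩ Set.Icc 0 β)).toReal := by
  have hdisj : Disjoint (O ∩ Set.Icc 0 τ) (Set.Ioc τ β) := by
    apply Set.disjoint_left.2
    rintro x ⟨_, _, hx⟩ ⟨hx', _⟩; linarith
  have hsub2 : (O ∩ Set.Icc 0 τ) ∪ Set.Ioc τ β ⊆ O ∩ Set.Icc 0 β := by
    rintro x (⟨h1, h2, h3⟩ | hx)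
    · exact ⟨h1, h2, le_trans h3 hτβ⟩
    · exact ⟨hsub hx, le_trans hτ (le_of_lt hx.1), hx.2⟩
  have h1 : volume (O ∩ Set.Icc 0 τ) + ENNReal.ofReal (β - τ) ≤ volume (O ∩ Set.Icc 0 β) := by
    rw [← Real.volume_Ioc, ← measure_union hdisj measurableSet_Ioc]
    exact measure_mono hsub2
  have hfin1 : volume (O ∩ Set.Icc 0 τ) ≠ ⊤ :=
    ne_top_of_le_ne_top hfin (measure_mono inter_subset_left)
  have := ENNReal.toReal_mono (ne_top_of_le_ne_top hfin (measure_mono inter_subset_left)) h1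
  rw [ENNReal.toReal_add hfin1 ENNReal.ofReal_ne_top, ENNReal.toReal_ofReal (by linarith)] at this
  exact this


noncomputable def rampFn (r R t : ℝ) : ℝ := max 0 (min 1 (min ((t - r)/r) ((2*R - t)/R)))

section Ramp
variable {r R : ℝ} (hr : 0 < r) (hrR : 2*r < R)
include hr hrR

lemma rampFn_nonneg (t : ℝ) : 0 ≤ rampFn r R t := le_max_left _ _

lemma rampFn_le_one (t : ℝ) : rampFn r R t ≤ 1 :=
  max_le (by norm_num) (min_le_left _ _)

lemma rampFn_zero_left {t : ℝ} (ht : t ≤ r) : rampFn r R t = 0 := by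
  have h1 : (t - r)/r ≤ 0 := div_nonpos_of_nonpos_of_nonneg (by linarith) hr.le
  have : min 1 (min ((t - r)/r) ((2*R - t)/R)) ≤ 0 :=
    le_trans (min_le_right _ _) (le_trans (min_le_left _ _) h1)
  exact max_eq_left this

lemma rampFn_one {t : ℝ} (h1 : 2*r ≤ t) (h2 : t ≤ R) : rampFn r R t = 1 := by
  have hR : 0 < R := by linarith
  have e1 : (1:ℝ) ≤ (t - r)/r := (le_div_iff₀ hr).2 (by linarith)
  have e2 : (1:ℝ) ≤ (2*R - t)/R := (le_div_iff₀ hR).2 (by linarith)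
  rw [rampFn, min_eq_left (le_min e1 e2), max_eq_right zero_le_one]

lemma rampFn_zero_right {t : ℝ} (ht : 2*R ≤ t) : rampFn r R t = 0 := by
  have hR : 0 < R := by linarith
  have h1 : (2*R - t)/R ≤ 0 := div_nonpos_of_nonpos_of_nonneg (by linarith) hR.le
  have : min 1 (min ((t - r)/r) ((2*R - t)/R)) ≤ 0 :=
    le_trans (min_le_right _ _) (le_trans (min_le_right _ _) h1)
  exact max_eq_left this

lemma rampFn_lip (a b : ℝ) : |rampFn r R a - rampFn r R b| ≤ (1/r) * |a - b| := by
  have hR : 0 < R := by linarith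
  have s1 : |rampFn r R a - rampFn r R b| ≤
      |min 1 (min ((a - r)/r) ((2*R - a)/R)) - min 1 (min ((b - r)/r) ((2*R - b)/R))| := by
    refine le_trans (abs_max_sub_max_le_max _ _ _ _) ?_
    simp [abs_nonneg]
  have s2 : |min 1 (min ((a - r)/r) ((2*R - a)/R)) - min 1 (min ((b - r)/r) ((2*R - b)/R))|
      ≤ |min ((a - r)/r) ((2*R - a)/R) - min ((b - r)/r) ((2*R - b)/R)| := by
    refine le_trans (abs_min_sub_min_le_max _ _ _ _) ?_
    simp [abs_nonneg]
  have s3 : |min ((a - r)/r) ((2*R - a)/R) - min ((b - r)/r) ((2*R - b)/R)|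
      ≤ max (|(a - r)/r - (b - r)/r|) (|(2*R - a)/R - (2*R - b)/R|) :=
    abs_min_sub_min_le_max _ _ _ _
  have e1 : |(a - r)/r - (b - r)/r| = |a - b| / r := by
    rw [div_sub_div_same, abs_div, abs_of_pos hr]
    ring_nf
  have e2 : |(2*R - a)/R - (2*R - b)/R| = |a - b| / R := by
    rw [div_sub_div_same, abs_div, abs_of_pos hR]
    congr 1
    rw [show 2*R - a - (2*R - b) = -(a - b) by ring, abs_neg]
  have e3 : |a - b| / R ≤ |a - b| / r :=
    div_le_div_of_nonneg_left (abs_nonneg _) hr (by linarith) |>.trans_eq rfl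
  calc |rampFn r R a - rampFn r R b|
      ≤ max (|(a - r)/r - (b - r)/r|) (|(2*R - a)/R - (2*R - b)/R|) :=
        le_trans s1 (le_trans s2 s3)
    _ ≤ |a - b| / r := by rw [e1, e2]; exact max_le le_rfl e3
    _ = (1/r) * |a - b| := by ring

lemma rampFn_lip_R {a b : ℝ} (ha : 2*r ≤ a) (hb : 2*r ≤ b) :
    |rampFn r R a - rampFn r R b| ≤ (1/R) * |a - b| := by
  have hR : 0 < R := by linarith
  have key : ∀ t : ℝ, 2*r ≤ t → rampFn r R t = max 0 (min 1 ((2*R - t)/R)) := by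
    intro t ht
    have e1 : (1:ℝ) ≤ (t - r)/r := (le_div_iff₀ hr).2 (by linarith)
    rw [rampFn, show min ((t - r)/r) ((2*R - t)/R) = min ((t-r)/r) ((2*R - t)/R) from rfl]
    congr 1
    rw [← min_assoc, min_eq_left e1]
  rw [key a ha, key b hb]
  have s1 : |max 0 (min 1 ((2*R - a)/R)) - max 0 (min 1 ((2*R - b)/R))|
      ≤ |min 1 ((2*R - a)/R) - min 1 ((2*R - b)/R)| := by
    refine le_trans (abs_max_sub_max_le_max _ _ _ _) ?_
    simp [abs_nonneg]
  have s2 : |min 1 ((2*R - a)/R) - min 1 ((2*R - b)/R)| ≤ |(2*R - a)/R - (2*R - b)/R| := by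
    refine le_trans (abs_min_sub_min_le_max _ _ _ _) ?_
    simp [abs_nonneg]
  have e2 : |(2*R - a)/R - (2*R - b)/R| = |a - b| / R := by
    rw [div_sub_div_same, abs_div, abs_of_pos hR]
    congr 1
    rw [show 2*R - a - (2*R - b) = -(a - b) by ring, abs_neg]
  calc _ ≤ |(2*R - a)/R - (2*R - b)/R| := le_trans s1 s2
    _ = (1/R) * |a - b| := by rw [e2]; ring
end Ramp


lemma rampFn_continuous (r R : ℝ) : Continuous (rampFn r R) := by
  unfold rampFn
  exact continuous_const.max (continuous_const.min
    (((continuous_id.sub continuous_const).div_const r).min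
      ((continuous_const.sub continuous_id).div_const R)))

lemma curve_est {Y : Type*} [MetricSpace Y]
    (ufn : Y → ℝ) (K₁ K₂ : Set Y) (hK₁ : IsClosed K₁) (hK₂ : IsClosed K₂)
    (c₁ c₂ : ℝ) (hc₁ : 0 ≤ c₁) (hc₂ : 0 ≤ c₂)
    (Hloc : ∀ y : Y, ∃ ε > 0,
      (y ∈ K₁ ∧ ∀ z w : Y, dist z y < ε → dist w y < ε → |ufn z - ufn w| ≤ c₁ * dist z w)
      ∨ (y ∈ K₂ ∧ ∀ z w : Y, dist z y < ε → dist w y < ε → |ufn z - ufn w| ≤ c₂ * dist z w)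
      ∨ (∀ z : Y, dist z y < ε → ufn z = ufn y)) :
    IsUpperGradient ufn
      (fun y => K₁.indicator (fun _ => ENNReal.ofReal c₁) y
        + K₂.indicator (fun _ => ENNReal.ofReal c₂) y) := by
  intro l hl γ hγ
  have hγc : ContinuousOn γ (Set.Icc 0 l) := hγ.continuousOn
  set E₁ : Set ℝ := Set.Icc 0 l ∩ γ ⁻¹' K₁ with hE₁def
  set E₂ : Set ℝ := Set.Icc 0 l ∩ γ ⁻¹' K₂ with hE₂def
  have hE₁c : IsClosed E₁ := hγc.preimage_isClosed_of_isClosed isClosed_Icc hK₁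
  have hE₂c : IsClosed E₂ := hγc.preimage_isClosed_of_isClosed isClosed_Icc hK₂
  have hE₁fin : volume E₁ ≠ ⊤ := by
    apply ne_top_of_le_ne_top _ (measure_mono (inter_subset_left (t := γ ⁻¹' K₁)))
    simp [Real.volume_Icc]
  have hE₂fin : volume E₂ ≠ ⊤ := by
    apply ne_top_of_le_ne_top _ (measure_mono (inter_subset_left (t := γ ⁻¹' K₂)))
    simp [Real.volume_Icc]
  -- dist bound along curve
  have hdistγ : ∀ a ∈ Set.Icc 0 l, ∀ b ∈ Set.Icc 0 l, dist (γ a) (γ b) ≤ |a - b| := by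
    intro a ha b hb
    have := hγ.dist_le_mul a ha b hb
    rwa [NNReal.coe_one, one_mul, Real.dist_eq] at this
  -- main real estimate
  have main : |ufn (γ l) - ufn (γ 0)| ≤
      c₁ * (volume E₁).toReal + c₂ * (volume E₂).toReal := by
    apply le_of_forall_pos_le_add
    intro η hη
    set ε' : ℝ := η / (c₁ + c₂ + 1) with hε'def
    have hε' : 0 < ε' := div_pos hη (by linarith)
    obtain ⟨O₁, hO₁sub, hO₁open, hO₁lt⟩ :=
      Set.exists_isOpen_lt_of_lt E₁ (volume E₁ + ENNReal.ofReal ε')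
        (ENNReal.lt_add_right hE₁fin (ENNReal.ofReal_pos.2 hε').ne')
    obtain ⟨O₂, hO₂sub, hO₂open, hO₂lt⟩ :=
      Set.exists_isOpen_lt_of_lt E₂ (volume E₂ + ENNReal.ofReal ε')
        (ENNReal.lt_add_right hE₂fin (ENNReal.ofReal_pos.2 hε').ne')
    have hO₁fin : volume O₁ ≠ ⊤ := ne_top_of_lt hO₁lt
    have hO₂fin : volume O₂ ≠ ⊤ := ne_top_of_lt hO₂lt
    set ψ : ℝ → ℝ := fun β => c₁ * (volume (O₁ ∩ Set.Icc 0 β)).toReal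
        + c₂ * (volume (O₂ ∩ Set.Icc 0 β)).toReal with hψdef
    set φ : ℝ → ℝ := fun τ => ufn (γ τ) with hφdef
    have hψm : Monotone ψ := by
      intro a b hab
      exact add_le_add (mul_le_mul_of_nonneg_left (volf_mono hO₁fin hab) hc₁)
        (mul_le_mul_of_nonneg_left (volf_mono hO₂fin hab) hc₂)
    have hψc : Continuous ψ := by
      exact ((continuous_const.mul (volf_lip hO₁fin).continuous).add
        (continuous_const.mul (volf_lip hO₂fin).continuous))
    have key : ∀ τ ∈ Set.Icc 0 l, ∃ δ > 0,
        ((γ τ ∈ K₁ ∧ ∀ β ∈ Set.Icc 0 l, |β - τ| ≤ δ → |φ β - φ τ| ≤ c₁ * |β - τ|)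
          ∨ (γ τ ∈ K₂ ∧ ∀ β ∈ Set.Icc 0 l, |β - τ| ≤ δ → |φ β - φ τ| ≤ c₂ * |β - τ|)
          ∨ (∀ β ∈ Set.Icc 0 l, |β - τ| ≤ δ → φ β = φ τ)) := by
      intro τ hτ
      obtain ⟨ε, hε, hcase⟩ := Hloc (γ τ)
      refine ⟨ε / 2, by linarith, ?_⟩
      have hdist : ∀ β ∈ Set.Icc 0 l, |β - τ| ≤ ε / 2 → dist (γ β) (γ τ) < ε := by
        intro β hβ hβτ
        calc dist (γ β) (γ τ) ≤ |β - τ| := hdistγ β hβ τ hτ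
          _ ≤ ε / 2 := hβτ
          _ < ε := by linarith
      rcases hcase with ⟨hK, hlip⟩ | ⟨hK, hlip⟩ | hconst
      · refine Or.inl ⟨hK, fun β hβ hβτ => ?_⟩
        calc |φ β - φ τ| ≤ c₁ * dist (γ β) (γ τ) :=
              hlip (γ β) (γ τ) (hdist β hβ hβτ) (by simpa using hε)
          _ ≤ c₁ * |β - τ| := mul_le_mul_of_nonneg_left (hdistγ β hβ τ hτ) hc₁
      · refine Or.inr (Or.inl ⟨hK, fun β hβ hβτ => ?_⟩)
        calc |φ β - φ τ| ≤ c₂ * dist (γ β) (γ τ) :=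
              hlip (γ β) (γ τ) (hdist β hβ hβτ) (by simpa using hε)
          _ ≤ c₂ * |β - τ| := mul_le_mul_of_nonneg_left (hdistγ β hβ τ hτ) hc₂
      · exact Or.inr (Or.inr (fun β hβ hβτ => hconst (γ β) (hdist β hβ hβτ)))
    have hφc : ContinuousOn φ (Set.Icc 0 l) := by
      intro τ hτ
      obtain ⟨δ, hδ, hkey⟩ := key τ hτ
      have hbound : ∀ β ∈ Set.Icc 0 l, |β - τ| ≤ δ → |φ β - φ τ| ≤ (c₁ + c₂) * |β - τ| := by
        intro β hβ hβτ
        have habs : (0:ℝ) ≤ |β - τ| := abs_nonneg _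
        rcases hkey with ⟨_, hb⟩ | ⟨_, hb⟩ | hb
        · have := hb β hβ hβτ; nlinarith
        · have := hb β hβ hβτ; nlinarith
        · rw [hb β hβ hβτ, sub_self, abs_zero]; positivity
      apply Metric.continuousWithinAt_iff.2
      intro ε2 hε2
      refine ⟨min δ (ε2 / (c₁ + c₂ + 1)), by positivity, ?_⟩
      intro β hβ hβd
      rw [Real.dist_eq] at hβd
      have h1 : |β - τ| ≤ δ := le_of_lt (lt_of_lt_of_le hβd (min_le_left _ _))
      have h2 : |β - τ| < ε2 / (c₁ + c₂ + 1) := lt_of_lt_of_le hβd (min_le_right _ _)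
      rw [Real.dist_eq]
      calc |φ β - φ τ| ≤ (c₁ + c₂) * |β - τ| := hbound β hβ h1
        _ ≤ (c₁ + c₂ + 1) * |β - τ| := by nlinarith [abs_nonneg (β - τ)]
        _ < (c₁ + c₂ + 1) * (ε2 / (c₁ + c₂ + 1)) :=
            mul_lt_mul_of_pos_left h2 (by linarith)
        _ = ε2 := by field_simp
    have Hind : ∀ τ ∈ Set.Icc 0 l, ∃ δ > 0, ∀ β ∈ Set.Icc 0 l, τ ≤ β → β ≤ τ + δ →
        |φ β - φ τ| ≤ ψ β - ψ τ := by
      intro τ hτ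
      obtain ⟨δ, hδ, hkey⟩ := key τ hτ
      rcases hkey with ⟨hK, hb⟩ | ⟨hK, hb⟩ | hb
      · have hτO : τ ∈ O₁ := hO₁sub ⟨hτ, hK⟩
        obtain ⟨δO, hδO, hballO⟩ := Metric.isOpen_iff.1 hO₁open τ hτO
        refine ⟨min δ (δO / 2), by positivity, ?_⟩
        intro β hβ hτβ hβδ
        have hβδ' : β ≤ τ + δO / 2 := le_trans hβδ (by
          have := min_le_right δ (δO / 2); linarith)
        have h1 : |β - τ| ≤ δ := by
          rw [abs_of_nonneg (by linarith)]
          have := min_le_left δ (δO / 2); linarith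
        have hIoc : Set.Ioc τ β ⊆ O₁ := by
          intro x hx
          apply hballO
          rw [Metric.mem_ball, Real.dist_eq, abs_of_pos (by linarith [hx.1])]
          have := hx.2; have := hx.1; linarith
        have hstep := volf_step hO₁open.measurableSet hO₁fin hτ.1 hτβ hIoc
        have hm2 := volf_mono hO₂fin hτβ
        calc |φ β - φ τ| ≤ c₁ * |β - τ| := hb β hβ h1
          _ = c₁ * (β - τ) := by rw [abs_of_nonneg (by linarith)]
          _ ≤ ψ β - ψ τ := by simp only [hψdef]; nlinarith [hstep]
      · have hτO : τ ∈ O₂ := hO₂sub ⟨hτ, hK⟩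
        obtain ⟨δO, hδO, hballO⟩ := Metric.isOpen_iff.1 hO₂open τ hτO
        refine ⟨min δ (δO / 2), by positivity, ?_⟩
        intro β hβ hτβ hβδ
        have hβδ' : β ≤ τ + δO / 2 := le_trans hβδ (by
          have := min_le_right δ (δO / 2); linarith)
        have h1 : |β - τ| ≤ δ := by
          rw [abs_of_nonneg (by linarith)]
          have := min_le_left δ (δO / 2); linarith
        have hIoc : Set.Ioc τ β ⊆ O₂ := by
          intro x hx
          apply hballO
          rw [Metric.mem_ball, Real.dist_eq, abs_of_pos (by linarith [hx.1])]
          have := hx.2; have := hx.1; linarith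
        have hstep := volf_step hO₂open.measurableSet hO₂fin hτ.1 hτβ hIoc
        have hm2 := volf_mono hO₁fin hτβ
        calc |φ β - φ τ| ≤ c₂ * |β - τ| := hb β hβ h1
          _ = c₂ * (β - τ) := by rw [abs_of_nonneg (by linarith)]
          _ ≤ ψ β - ψ τ := by simp only [hψdef]; nlinarith [hstep]
      · refine ⟨δ, hδ, ?_⟩
        intro β hβ hτβ hβδ
        have h1 : |β - τ| ≤ δ := by rw [abs_of_nonneg (by linarith)]; linarith
        rw [hb β hβ h1, sub_self, abs_zero]
        exact sub_nonneg.2 (hψm hτβ)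
    have hfinal := aux_induction hl hφc hψc hψm Hind
    have hψ0 : ψ 0 ≥ 0 := by positivity
    have hψl : ψ l ≤ c₁ * ((volume E₁).toReal + ε') + c₂ * ((volume E₂).toReal + ε') := by
      have b1 : (volume (O₁ ∩ Set.Icc 0 l)).toReal ≤ (volume E₁).toReal + ε' := by
        have : volume (O₁ ∩ Set.Icc 0 l) ≤ volume E₁ + ENNReal.ofReal ε' :=
          le_of_lt (lt_of_le_of_lt (measure_mono inter_subset_left) hO₁lt)
        calc (volume (O₁ ∩ Set.Icc 0 l)).toReal
            ≤ (volume E₁ + ENNReal.ofReal ε').toReal := ENNReal.toReal_mono (by finiteness) this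
          _ = (volume E₁).toReal + ε' := by
              rw [ENNReal.toReal_add hE₁fin ENNReal.ofReal_ne_top,
                ENNReal.toReal_ofReal hε'.le]
      have b2 : (volume (O₂ ∩ Set.Icc 0 l)).toReal ≤ (volume E₂).toReal + ε' := by
        have : volume (O₂ ∩ Set.Icc 0 l) ≤ volume E₂ + ENNReal.ofReal ε' :=
          le_of_lt (lt_of_le_of_lt (measure_mono inter_subset_left) hO₂lt)
        calc (volume (O₂ ∩ Set.Icc 0 l)).toReal
            ≤ (volume E₂ + ENNReal.ofReal ε').toReal := ENNReal.toReal_mono (by finiteness) this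
          _ = (volume E₂).toReal + ε' := by
              rw [ENNReal.toReal_add hE₂fin ENNReal.ofReal_ne_top,
                ENNReal.toReal_ofReal hε'.le]
      exact add_le_add (mul_le_mul_of_nonneg_left b1 hc₁) (mul_le_mul_of_nonneg_left b2 hc₂)
    have hη' : (c₁ + c₂) * ε' ≤ η := by
      rw [hε'def]
      calc (c₁ + c₂) * (η / (c₁ + c₂ + 1)) ≤ (c₁ + c₂ + 1) * (η / (c₁ + c₂ + 1)) := by
            apply mul_le_mul_of_nonneg_right (by linarith) (by positivity)
        _ = η := by field_simp
    calc |ufn (γ l) - ufn (γ 0)| = |φ l - φ 0| := rfl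
      _ ≤ ψ l - ψ 0 := hfinal
      _ ≤ ψ l := by linarith
      _ ≤ c₁ * ((volume E₁).toReal + ε') + c₂ * ((volume E₂).toReal + ε') := hψl
      _ = c₁ * (volume E₁).toReal + c₂ * (volume E₂).toReal + (c₁ + c₂) * ε' := by ring
      _ ≤ c₁ * (volume E₁).toReal + c₂ * (volume E₂).toReal + η := by linarith
  -- ENNReal conclusion
  have hE₁sub : E₁ ⊆ Set.Icc 0 l := inter_subset_left
  have hE₂sub : E₂ ⊆ Set.Icc 0 l := inter_subset_left
  calc ENNReal.ofReal |ufn (γ l) - ufn (γ 0)|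
      ≤ ENNReal.ofReal (c₁ * (volume E₁).toReal + c₂ * (volume E₂).toReal) :=
        ENNReal.ofReal_le_ofReal main
    _ = ENNReal.ofReal c₁ * volume E₁ + ENNReal.ofReal c₂ * volume E₂ := by
        rw [ENNReal.ofReal_add (by positivity) (by positivity),
          ENNReal.ofReal_mul hc₁, ENNReal.ofReal_mul hc₂,
          ENNReal.ofReal_toReal hE₁fin, ENNReal.ofReal_toReal hE₂fin]
    _ = ∫⁻ t in Set.Icc (0:ℝ) l,
          (E₁.indicator (fun _ => ENNReal.ofReal c₁) t
            + E₂.indicator (fun _ => ENNReal.ofReal c₂) t) := by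
        rw [lintegral_add_left (measurable_const.indicator hE₁c.measurableSet)]
        rw [lintegral_indicator hE₁c.measurableSet, lintegral_indicator hE₂c.measurableSet]
        rw [setLIntegral_const, setLIntegral_const]
        rw [Measure.restrict_apply hE₁c.measurableSet, Measure.restrict_apply hE₂c.measurableSet,
          inter_eq_left.2 hE₁sub, inter_eq_left.2 hE₂sub]
    _ ≤ ∫⁻ t in Set.Icc (0:ℝ) l,
          (K₁.indicator (fun _ => ENNReal.ofReal c₁) (γ t)
            + K₂.indicator (fun _ => ENNReal.ofReal c₂) (γ t)) := by
        apply lintegral_mono_ae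
        apply (ae_restrict_iff' measurableSet_Icc).2
        apply ae_of_all
        intro t ht
        apply add_le_add
        · by_cases h : t ∈ E₁
          · rw [Set.indicator_of_mem h, Set.indicator_of_mem (show γ t ∈ K₁ from h.2)]
          · rw [Set.indicator_of_notMem h]; exact zero_le
        · by_cases h : t ∈ E₂
          · rw [Set.indicator_of_mem h, Set.indicator_of_mem (show γ t ∈ K₂ from h.2)]
          · rw [Set.indicator_of_notMem h]; exact zero_le

end AuxNotCutPoint

/-- In a space satisfying a `(1,p)`-Poincaré inequality, a point `x₀` with
`liminf_{r→0} μ(B_r(x₀))/rᵖ = 0` is not a local cut point. -/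




theorem not_localCutPoint_of_poincare {X : Type*} [MetricSpace X] [MeasurableSpace X]
    [BorelSpace X] [CompleteSpace X] [LocallyCompactSpace X]
    (hlen : IsLengthSpace X) (μ : Measure X)
    (hμ : ∀ (x : X) (r : ℝ), 0 < r → 0 < μ (Metric.ball x r) ∧ μ (Metric.ball x r) < ⊤)
    (p : ℝ) (hp : 1 ≤ p) (hP : PoincareIneq μ p) (x₀ : X)
    (hliminf : Filter.liminf
      (fun r : ℝ => μ (Metric.ball x₀ r) / ENNReal.ofReal (r ^ p)) (𝓝[>] 0) = 0) :
    ¬ IsLocalCutPoint x₀ := by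
  rintro ⟨Uall, hUnhds, hUconn, hUnpc⟩
  rw [IsPreconnected] at hUnpc
  push_neg at hUnpc
  obtain ⟨uS, vS, huS, hvS, hcover, hne_u, hne_v, hdisj⟩ := hUnpc
  set S : Set X := Uall \ {x₀} with hSdef
  have hx₀U : x₀ ∈ Uall := mem_of_mem_nhds hUnhds
  -- x₀ is in the closure of both pieces
  have hxcl : ∀ aS bS : Set X, IsOpen aS → IsOpen bS → S ⊆ aS ∪ bS →
      S ∩ (aS ∩ bS) = ∅ → (S ∩ aS).Nonempty → (S ∩ bS).Nonempty →
      x₀ ∈ closure (S ∩ aS) := by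
    intro aS bS haS hbS hcov hdis hnea hneb
    by_contra hxnot
    obtain ⟨w, hwU, hwa, hwc⟩ := hUconn.isPreconnected (aS ∩ {x₀}ᶜ)
      (closure (S ∩ aS))ᶜ (haS.inter isOpen_compl_singleton)
      isClosed_closure.isOpen_compl
      (by
        intro y hyU
        by_cases hy : y ∈ closure (S ∩ aS)
        · left
          have hyne : y ≠ x₀ := fun h => hxnot (h ▸ hy)
          have hyS : y ∈ S := ⟨hyU, hyne⟩
          have hya : y ∈ aS := by
            rcases hcov hyS with h | h
            · exact h
            · exfalso
              obtain ⟨z, hz⟩ := (_root_.mem_closure_iff.1 hy) bS hbS h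
              exact Set.eq_empty_iff_forall_notMem.1 hdis z ⟨hz.2.1, hz.2.2, hz.1⟩
          exact ⟨hya, hyne⟩
        · exact Or.inr hy)
      (by
        obtain ⟨z, hzS, hza⟩ := hnea
        exact ⟨z, hzS.1, hza, hzS.2⟩)
      ⟨x₀, hx₀U, hxnot⟩
    exact hwc (subset_closure ⟨⟨hwU, hwa.2⟩, hwa.1⟩)
  have hclu : x₀ ∈ closure (S ∩ uS) := hxcl uS vS huS hvS hcover hdisj hne_u hne_v
  have hclv : x₀ ∈ closure (S ∩ vS) := by
    apply hxcl vS uS hvS huS (by rwa [Set.union_comm])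
      (by rwa [show vS ∩ uS = uS ∩ vS from Set.inter_comm _ _]) hne_v hne_u
  -- choose the scale R
  obtain ⟨ε₀, hε₀, hballU⟩ := Metric.mem_nhds_iff.1 hUnhds
  set R : ℝ := ε₀ / 5 with hRdef
  have hR : 0 < R := by positivity
  have hballR : Metric.ball x₀ (5*R) ⊆ Uall := by
    intro z hz
    apply hballU
    rw [Metric.mem_ball] at hz ⊢
    calc dist z x₀ < 5*R := hz
      _ = ε₀ := by rw [hRdef]; ring
  have hballR1 : Metric.ball x₀ R ⊆ Metric.ball x₀ (5*R) :=
    Metric.ball_subset_ball (by linarith)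
  -- Poincaré constant at scale R
  obtain ⟨Cp, hCp, hPI⟩ := hP R hR
  -- measures
  obtain ⟨hM0, hMtop⟩ := hμ x₀ R hR
  set M : ℝ≥0∞ := μ (Metric.ball x₀ R) with hMdef
  -- pick points on both sides
  obtain ⟨y₁, hy₁, hy₁d⟩ := Metric.mem_closure_iff.1 hclu R hR
  obtain ⟨y₂, hy₂, hy₂d⟩ := Metric.mem_closure_iff.1 hclv R hR
  have hy₁x : y₁ ≠ x₀ := fun h => hy₁.1.2 (h ▸ rfl)
  have hy₂x : y₂ ≠ x₀ := fun h => hy₂.1.2 (h ▸ rfl)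
  set s₀ : ℝ := dist x₀ y₁ / 2 with hs₀def
  have hs₀ : 0 < s₀ := by
    have : 0 < dist x₀ y₁ := dist_pos.2 (fun h => hy₁x h.symm)
    positivity
  -- the two test sets
  set Sa : Set X := uS ∩ {x₀}ᶜ ∩ {z | s₀ < dist x₀ z} ∩ Metric.ball x₀ R with hSadef
  set Sb : Set X := vS ∩ {x₀}ᶜ ∩ Metric.ball x₀ R with hSbdef
  have hSaopen : IsOpen Sa := by
    apply IsOpen.inter
    apply IsOpen.inter
    exact huS.inter isOpen_compl_singleton
    · exact isOpen_lt continuous_const (Continuous.dist continuous_const continuous_id)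
    · exact Metric.isOpen_ball
  have hSbopen : IsOpen Sb := by
    exact (hvS.inter isOpen_compl_singleton).inter Metric.isOpen_ball
  have hy₁Sa : y₁ ∈ Sa := by
    refine ⟨⟨⟨hy₁.2, fun h => hy₁x h⟩, ?_⟩, ?_⟩
    · simp only [Set.mem_setOf_eq, hs₀def]
      have : 0 < dist x₀ y₁ := dist_pos.2 (fun h => hy₁x h.symm)
      linarith
    · rw [Metric.mem_ball, dist_comm]; exact hy₁d
  have hy₂Sb : y₂ ∈ Sb := by
    refine ⟨⟨hy₂.2, fun h => hy₂x h⟩, ?_⟩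
    rw [Metric.mem_ball, dist_comm]; exact hy₂d
  have hSapos : 0 < μ Sa := by
    obtain ⟨ε₁, hε₁, hball₁⟩ := Metric.isOpen_iff.1 hSaopen y₁ hy₁Sa
    calc (0:ℝ≥0∞) < μ (Metric.ball y₁ ε₁) := (hμ y₁ ε₁ hε₁).1
      _ ≤ μ Sa := measure_mono hball₁
  have hSbpos : 0 < μ Sb := by
    obtain ⟨ε₂, hε₂, hball₂⟩ := Metric.isOpen_iff.1 hSbopen y₂ hy₂Sb
    calc (0:ℝ≥0∞) < μ (Metric.ball y₂ ε₂) := (hμ y₂ ε₂ hε₂).1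
      _ ≤ μ Sb := measure_mono hball₂
  set L : ℝ≥0∞ := min (μ Sa) (μ Sb) with hLdef
  have hL0 : 0 < L := lt_min hSapos hSbpos
  have hLM : L ≤ M := le_trans (min_le_left _ _) (measure_mono (by
    rw [hSadef]; exact Set.inter_subset_right))
  have hLtop : L ≠ ⊤ := ne_top_of_le_ne_top hMtop.ne hLM
  -- constants for the contradiction
  set C' : ℝ≥0∞ := ENNReal.ofReal (Cp * R) with hC'def
  have hC'top : C' ≠ ⊤ := ENNReal.ofReal_ne_top
  set lam : ℝ≥0∞ := L / M with hlamdef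
  have hlam0 : 0 < lam := ENNReal.div_pos hL0.ne' hMtop.ne
  have hlamtop : lam ≠ ⊤ := by
    rw [hlamdef]
    exact (ENNReal.div_lt_top hLtop hM0.ne').ne
  set q : ℝ≥0∞ := lam / (1 + C') with hqdef
  have h1C0 : (1 + C') ≠ 0 := by
    intro h
    exact one_ne_zero (add_eq_zero.1 h).1
  have h1Ctop : (1 + C') ≠ ⊤ := by
    rw [ENNReal.add_ne_top]; exact ⟨ENNReal.one_ne_top, hC'top⟩
  have hq0 : 0 < q := ENNReal.div_pos hlam0.ne' h1Ctop
  have hqtop : q ≠ ⊤ := by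
    rw [hqdef]
    exact (ENNReal.div_lt_top hlamtop h1C0).ne
  have hp0 : (0:ℝ) < p := by linarith
  set P3 : ℝ≥0∞ := ENNReal.ofReal ((3:ℝ) ^ p) with hP3def
  have hP30 : P3 ≠ 0 := by
    rw [hP3def]
    simp only [ne_eq, ENNReal.ofReal_eq_zero, not_le]
    exact Real.rpow_pos_of_pos (by norm_num) p
  have hP3top : P3 ≠ ⊤ := ENNReal.ofReal_ne_top
  set qp : ℝ≥0∞ := q ^ p with hqpdef
  have hqp0 : 0 < qp := ENNReal.rpow_pos hq0 hqtop
  have hqptop : qp ≠ ⊤ := ENNReal.rpow_ne_top_of_nonneg hp0.le hqtop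
  set ε : ℝ≥0∞ := qp * M / P3 with hεdef
  have hε0 : 0 < ε := ENNReal.div_pos (by
      exact (ENNReal.mul_pos hqp0.ne' hM0.ne').ne') hP3top
  -- choose the small radius from the liminf hypothesis
  have hfreq : ∃ᶠ ρ in 𝓝[>] (0:ℝ),
      μ (Metric.ball x₀ ρ) / ENNReal.ofReal (ρ ^ p) < ε := by
    exact Filter.frequently_lt_of_liminf_lt (by isBoundedDefault)
      (by rw [hliminf]; exact hε0)
  have hev : ∀ᶠ ρ in 𝓝[>] (0:ℝ), ρ < min s₀ R ∧ 0 < ρ := by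
    apply Filter.Eventually.and
    · exact eventually_nhdsWithin_of_eventually_nhds
        (Filter.Tendsto.eventually_lt_const (lt_min hs₀ hR) Filter.tendsto_id)
    · exact eventually_mem_nhdsWithin
  obtain ⟨ρ, hFρ, hρlt, hρ0⟩ := (hfreq.and_eventually hev).exists
  set r : ℝ := ρ / 3 with hrdef
  have hr : 0 < r := by positivity
  have hρs₀ : ρ < s₀ := lt_of_lt_of_le hρlt (min_le_left _ _)
  have hρR : ρ < R := lt_of_lt_of_le hρlt (min_le_right _ _)
  have hrR : 2*r < R := by rw [hrdef]; linarith
  have h2rs₀ : 2*r ≤ s₀ := by rw [hrdef]; linarith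
  set K₁ : Set X := {z | dist x₀ z ∈ Set.Icc r (2*r)} with hK₁def
  set K₂ : Set X := {z | dist x₀ z ∈ Set.Icc R (2*R)} with hK₂def
  have hdistc : Continuous (fun z : X => dist x₀ z) :=
    Continuous.dist continuous_const continuous_id
  have hK₁c : IsClosed K₁ := isClosed_Icc.preimage hdistc
  have hK₂c : IsClosed K₂ := isClosed_Icc.preimage hdistc
  set ufn : X → ℝ :=
    fun y => Set.indicator (uS ∩ {x₀}ᶜ) (fun z => rampFn r R (dist x₀ z)) y with hufndef
  set gfn : X → ℝ≥0∞ := fun y => K₁.indicator (fun _ => ENNReal.ofReal (1/r)) y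
      + K₂.indicator (fun _ => ENNReal.ofReal (1/R)) y with hgfndef
  have hufnm : Measurable ufn := by
    apply Measurable.indicator
    · exact ((rampFn_continuous r R).comp hdistc).measurable
    · exact (huS.inter isOpen_compl_singleton).measurableSet
  have hgfnm : Measurable gfn :=
    (measurable_const.indicator hK₁c.measurableSet).add
      (measurable_const.indicator hK₂c.measurableSet)
  -- basic facts about ufn
  have hufn_mem : ∀ z : X, z ∈ uS → z ≠ x₀ → ufn z = rampFn r R (dist x₀ z) := by
    intro z h1 h2
    simp only [hufndef]
    exact Set.indicator_of_mem (Set.mem_inter h1 (Set.mem_compl_singleton_iff.2 h2)) _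
  have hufn_nm : ∀ z : X, z ∉ uS ∩ {x₀}ᶜ → ufn z = 0 := by
    intro z h
    simp only [hufndef]
    exact Set.indicator_of_notMem h _
  have hzero_in : ∀ w : X, dist x₀ w ≤ r → ufn w = 0 := by
    intro w hw
    by_cases hmem : w ∈ uS ∩ {x₀}ᶜ
    · simp only [hufndef]
      rw [Set.indicator_of_mem hmem]; exact rampFn_zero_left hr hrR hw
    · exact hufn_nm w hmem
  have hzero_out : ∀ w : X, 2*R ≤ dist x₀ w → ufn w = 0 := by
    intro w hw
    by_cases hmem : w ∈ uS ∩ {x₀}ᶜ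
    · simp only [hufndef]
      rw [Set.indicator_of_mem hmem]; exact rampFn_zero_right hr hrR hw
    · exact hufn_nm w hmem
  have hufn_v : ∀ z : X, z ∈ vS → dist x₀ z < 5*R → ufn z = 0 := by
    intro z hzv hzb
    apply hufn_nm
    rintro ⟨hzu, hzx⟩
    have hzS : z ∈ S := ⟨hballR (by rwa [Metric.mem_ball, dist_comm]), hzx⟩
    exact Set.eq_empty_iff_forall_notMem.1 hdisj z ⟨hzS, hzu, hzv⟩
  -- the local Lipschitz/constant structure
  have Hloc : ∀ y : X, ∃ ε' > 0,
      (y ∈ K₁ ∧ ∀ z w : X, dist z y < ε' → dist w y < ε' →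
        |ufn z - ufn w| ≤ (1/r) * dist z w)
      ∨ (y ∈ K₂ ∧ ∀ z w : X, dist z y < ε' → dist w y < ε' →
        |ufn z - ufn w| ≤ (1/R) * dist z w)
      ∨ (∀ z : X, dist z y < ε' → ufn z = ufn y) := by
    intro y
    have hdy : ∀ z : X, dist x₀ y - dist z y ≤ dist x₀ z ∧
        dist x₀ z ≤ dist x₀ y + dist z y := by
      intro z
      constructor
      · have := dist_triangle x₀ z y
        rw [dist_comm z y] at this ⊢
        linarith
      · have := dist_triangle x₀ y z
        rw [dist_comm y z] at this
        linarith
    set d : ℝ := dist x₀ y with hddef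
    rcases lt_or_ge d r with hcase | hcase
    · refine ⟨r - d, by linarith, Or.inr (Or.inr ?_)⟩
      intro z hz
      rw [hzero_in z (by linarith [(hdy z).2]), hzero_in y (by linarith)]
    rcases lt_or_ge (2*R) d with hcase2 | hcase2
    · refine ⟨d - 2*R, by linarith, Or.inr (Or.inr ?_)⟩
      intro z hz
      rw [hzero_out z (by linarith [(hdy z).1]), hzero_out y (by linarith)]
    -- now r ≤ d ≤ 2R
    have hyx : y ≠ x₀ := by
      intro h
      rw [h, dist_self] at hddef
      simp only [hddef] at hcase
      linarith [hcase, hr]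
    have hyU : y ∈ uS ∨ y ∈ vS := by
      apply hcover
      refine ⟨hballR ?_, hyx⟩
      rw [Metric.mem_ball, dist_comm]
      calc dist x₀ y = d := rfl
        _ ≤ 2*R := hcase2
        _ < 5*R := by linarith
    rcases hyU with hyu | hyv
    · obtain ⟨εᵤ, hεᵤ, hballu⟩ := Metric.isOpen_iff.1 huS y hyu
      rcases le_or_gt d (2*r) with hsub | hsub
      · -- K₁ zone
        refine ⟨min εᵤ (d/2), lt_min hεᵤ (by linarith), Or.inl ⟨⟨hcase, hsub⟩, ?_⟩⟩
        intro z w hz hw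
        have hzmem : ufn z = rampFn r R (dist x₀ z) := by
          apply hufn_mem
          · exact hballu (by rw [Metric.mem_ball]; exact lt_of_lt_of_le hz (min_le_left _ _))
          · intro h
            have hlt := lt_of_lt_of_le hz (min_le_right _ _)
            rw [h, ← hddef] at hlt
            linarith
        have hwmem : ufn w = rampFn r R (dist x₀ w) := by
          apply hufn_mem
          · exact hballu (by rw [Metric.mem_ball]; exact lt_of_lt_of_le hw (min_le_left _ _))
          · intro h
            have hlt := lt_of_lt_of_le hw (min_le_right _ _)
            rw [h, ← hddef] at hlt
            linarith
        rw [hzmem, hwmem]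
        calc |rampFn r R (dist x₀ z) - rampFn r R (dist x₀ w)|
            ≤ (1/r) * |dist x₀ z - dist x₀ w| := rampFn_lip hr hrR _ _
          _ ≤ (1/r) * dist z w := by
              apply mul_le_mul_of_nonneg_left _ (by positivity)
              rw [dist_comm x₀ z, dist_comm x₀ w]
              exact abs_dist_sub_le z w x₀
      rcases lt_or_ge d R with hsub2 | hsub2
      · -- constant-1 zone
        refine ⟨min εᵤ (min ((d - 2*r)/2) ((R - d)/2)), lt_min hεᵤ (lt_min (by linarith) (by linarith)), Or.inr (Or.inr ?_)⟩
        intro z hz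
        have hz1 : dist z y < εᵤ := lt_of_lt_of_le hz (min_le_left _ _)
        have hz2 : dist z y < (d - 2*r)/2 :=
          lt_of_lt_of_le hz (le_trans (min_le_right _ _) (min_le_left _ _))
        have hz3 : dist z y < (R - d)/2 :=
          lt_of_lt_of_le hz (le_trans (min_le_right _ _) (min_le_right _ _))
        have hdz1 : 2*r ≤ dist x₀ z := by linarith [(hdy z).1]
        have hdz2 : dist x₀ z ≤ R := by linarith [(hdy z).2]
        have hone_z : ufn z = 1 := by
          rw [hufn_mem z (hballu (by rwa [Metric.mem_ball])) (by
            intro h; rw [h, dist_self] at hdz1; linarith)]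
          exact rampFn_one hr hrR hdz1 hdz2
        have hone_y : ufn y = 1 := by
          rw [hufn_mem y hyu hyx]
          exact rampFn_one hr hrR (by linarith) (by linarith)
        rw [hone_z, hone_y]
      · -- K₂ zone
        refine ⟨min εᵤ ((d - 2*r)/2), lt_min hεᵤ (by linarith), Or.inr (Or.inl ⟨⟨hsub2, hcase2⟩, ?_⟩)⟩
        intro z w hz hw
        have hdz1 : 2*r ≤ dist x₀ z := by
          have := lt_of_lt_of_le hz (min_le_right _ _)
          linarith [(hdy z).1]
        have hdw1 : 2*r ≤ dist x₀ w := by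
          have := lt_of_lt_of_le hw (min_le_right _ _)
          linarith [(hdy w).1]
        have hzmem : ufn z = rampFn r R (dist x₀ z) := by
          apply hufn_mem
          · exact hballu (by rw [Metric.mem_ball]; exact lt_of_lt_of_le hz (min_le_left _ _))
          · intro h; rw [h, dist_self] at hdz1; linarith
        have hwmem : ufn w = rampFn r R (dist x₀ w) := by
          apply hufn_mem
          · exact hballu (by rw [Metric.mem_ball]; exact lt_of_lt_of_le hw (min_le_left _ _))
          · intro h; rw [h, dist_self] at hdw1; linarith
        rw [hzmem, hwmem]
        calc |rampFn r R (dist x₀ z) - rampFn r R (dist x₀ w)|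
            ≤ (1/R) * |dist x₀ z - dist x₀ w| := rampFn_lip_R hr hrR hdz1 hdw1
          _ ≤ (1/R) * dist z w := by
              apply mul_le_mul_of_nonneg_left _ (by positivity)
              rw [dist_comm x₀ z, dist_comm x₀ w]
              exact abs_dist_sub_le z w x₀
    · -- y ∈ vS : locally zero
      obtain ⟨εᵥ, hεᵥ, hballv⟩ := Metric.isOpen_iff.1 hvS y hyv
      refine ⟨min εᵥ (5*R - d), lt_min hεᵥ (by linarith), Or.inr (Or.inr ?_)⟩
      intro z hz
      have hz1 : dist z y < εᵥ := lt_of_lt_of_le hz (min_le_left _ _)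
      have hz2 : dist z y < 5*R - d := lt_of_lt_of_le hz (min_le_right _ _)
      rw [hufn_v z (hballv (by rwa [Metric.mem_ball])) (by linarith [(hdy z).2]),
        hufn_v y hyv (by linarith)]
  -- upper gradient property
  have hug : IsUpperGradient ufn gfn :=
    curve_est ufn K₁ K₂ hK₁c hK₂c (1/r) (1/R) (by positivity) (by positivity) Hloc
  -- apply the Poincaré inequality at scale R
  have hPIapp := hPI x₀ R hR le_rfl ufn hufnm gfn hgfnm hug
  set c : ℝ := ⨍ z in Metric.ball x₀ R, ufn z ∂μ with hcdef
  -- value of ufn on the two test sets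
  have hSaone : ∀ z ∈ Sa, ufn z = 1 := by
    rintro z ⟨⟨⟨hzu, hzx⟩, hzs⟩, hzb⟩
    rw [hufn_mem z hzu (Set.mem_compl_singleton_iff.1 hzx)]
    apply rampFn_one hr hrR
    · have : s₀ < dist x₀ z := hzs
      linarith
    · rw [Metric.mem_ball] at hzb
      rw [dist_comm]
      exact hzb.le
  have hSbzero : ∀ z ∈ Sb, ufn z = 0 := by
    rintro z ⟨⟨hzv, hzx⟩, hzb⟩
    apply hufn_v z hzv
    rw [Metric.mem_ball] at hzb
    rw [dist_comm]
    linarith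
  have hdisjab : Disjoint Sa Sb := by
    rw [Set.disjoint_left]
    rintro z ⟨⟨⟨hzu, hzx⟩, _⟩, hzb⟩ ⟨⟨hzv, _⟩, _⟩
    have hzS : z ∈ S := ⟨hballR (hballR1 hzb), hzx⟩
    exact Set.eq_empty_iff_forall_notMem.1 hdisj z ⟨hzS, hzu, hzv⟩
  have hsubab : Sa ∪ Sb ⊆ Metric.ball x₀ R :=
    Set.union_subset Set.inter_subset_right Set.inter_subset_right
  -- lower bound for the LHS of the Poincaré inequality
  have habs1 : (1:ℝ≥0∞) ≤ ENNReal.ofReal |1 - c| + ENNReal.ofReal |0 - c| := by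
    rw [← ENNReal.ofReal_add (abs_nonneg _) (abs_nonneg _), ← ENNReal.ofReal_one]
    apply ENNReal.ofReal_le_ofReal
    have h1 : ((1:ℝ) - c) + (c - 0) = 1 := by ring
    calc (1:ℝ) = |(1 - c) + (c - 0)| := by rw [h1]; norm_num
      _ ≤ |1 - c| + |c - 0| := abs_add_le _ _
      _ = |1 - c| + |0 - c| := by rw [abs_sub_comm c 0]
  have hLHS : lam ≤ ⨍⁻ y in Metric.ball x₀ R,
      ENNReal.ofReal |ufn y - c| ∂μ := by
    rw [setLAverage_eq]
    apply ENNReal.div_le_div_right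
    have e1 : ∫⁻ y in Sa, ENNReal.ofReal |ufn y - c| ∂μ
        = ENNReal.ofReal |1 - c| * μ Sa := by
      rw [setLIntegral_congr_fun hSaopen.measurableSet
        (fun z hz => by rw [hSaone z hz])]
      exact setLIntegral_const _ _
    have e2 : ∫⁻ y in Sb, ENNReal.ofReal |ufn y - c| ∂μ
        = ENNReal.ofReal |0 - c| * μ Sb := by
      rw [setLIntegral_congr_fun hSbopen.measurableSet
        (fun z hz => by rw [hSbzero z hz])]
      exact setLIntegral_const _ _
    calc L = 1 * L := (one_mul L).symm
      _ ≤ (ENNReal.ofReal |1 - c| + ENNReal.ofReal |0 - c|) * L :=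
          mul_le_mul_left habs1 _
      _ = ENNReal.ofReal |1 - c| * L + ENNReal.ofReal |0 - c| * L := by rw [add_mul]
      _ ≤ ENNReal.ofReal |1 - c| * μ Sa + ENNReal.ofReal |0 - c| * μ Sb :=
          add_le_add (mul_le_mul_right (min_le_left _ _) _)
            (mul_le_mul_right (min_le_right _ _) _)
      _ = (∫⁻ y in Sa, ENNReal.ofReal |ufn y - c| ∂μ)
          + ∫⁻ y in Sb, ENNReal.ofReal |ufn y - c| ∂μ := by rw [e1, e2]
      _ = ∫⁻ y in Sa ∪ Sb, ENNReal.ofReal |ufn y - c| ∂μ :=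
          (lintegral_union hSbopen.measurableSet hdisjab).symm
      _ ≤ ∫⁻ y in Metric.ball x₀ R, ENNReal.ofReal |ufn y - c| ∂μ :=
          lintegral_mono_set hsubab
  -- upper bound for the averaged gradient term
  have hRHS : (⨍⁻ y in Metric.ball x₀ R, gfn y ^ p ∂μ)
      ≤ P3 * (μ (Metric.ball x₀ ρ) / ENNReal.ofReal (ρ ^ p)) / M := by
    rw [setLAverage_eq]
    apply ENNReal.div_le_div_right
    have h3r : 3 * r = ρ := by rw [hrdef]; ring
    calc ∫⁻ y in Metric.ball x₀ R, gfn y ^ p ∂μ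
        ≤ ∫⁻ y in Metric.ball x₀ R,
            (Metric.ball x₀ (3*r)).indicator
              (fun _ => ENNReal.ofReal (1/r) ^ p) y ∂μ := by
          apply lintegral_mono_ae
          rw [ae_restrict_iff' Metric.isOpen_ball.measurableSet]
          apply ae_of_all
          intro y hy
          rw [Metric.mem_ball] at hy
          have hynotK₂ : y ∉ K₂ := by
            intro h
            have h1 : R ≤ dist x₀ y := h.1
            rw [dist_comm] at h1
            linarith
          by_cases hyK : y ∈ K₁
          · have h3 : y ∈ Metric.ball x₀ (3*r) := by
              rw [Metric.mem_ball, dist_comm]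
              have h2 : dist x₀ y ≤ 2*r := hyK.2
              linarith
            rw [Set.indicator_of_mem h3]
            have hgy : gfn y = ENNReal.ofReal (1/r) := by
              simp only [hgfndef]
              rw [Set.indicator_of_mem hyK, Set.indicator_of_notMem hynotK₂, add_zero]
            rw [hgy]
          · have hgy : gfn y = 0 := by
              simp only [hgfndef]
              rw [Set.indicator_of_notMem hyK, Set.indicator_of_notMem hynotK₂, add_zero]
            rw [hgy, ENNReal.zero_rpow_of_pos hp0]
            exact zero_le
      _ ≤ ∫⁻ y, (Metric.ball x₀ (3*r)).indicator
            (fun _ => ENNReal.ofReal (1/r) ^ p) y ∂μ := setLIntegral_le_lintegral _ _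
      _ = ENNReal.ofReal (1/r) ^ p * μ (Metric.ball x₀ (3*r)) := by
          rw [lintegral_indicator Metric.isOpen_ball.measurableSet, setLIntegral_const]
      _ = P3 * (μ (Metric.ball x₀ ρ) / ENNReal.ofReal (ρ ^ p)) := by
          rw [h3r]
          have e1 : ENNReal.ofReal (1/r) ^ p = ENNReal.ofReal ((1/r) ^ p) :=
            ENNReal.ofReal_rpow_of_pos (by positivity)
          have e2 : (1/r : ℝ) ^ p = 3 ^ p * (ρ ^ p)⁻¹ := by
            have h1 : (1:ℝ)/r = 3 * ρ⁻¹ := by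
              rw [hrdef]; field_simp
            rw [h1, Real.mul_rpow (by norm_num) (by positivity),
              Real.inv_rpow hρ0.le]
          have e3 : ENNReal.ofReal (3 ^ p * (ρ ^ p)⁻¹)
              = P3 * (ENNReal.ofReal (ρ ^ p))⁻¹ := by
            rw [ENNReal.ofReal_mul (by positivity), hP3def,
              ENNReal.ofReal_inv_of_pos (Real.rpow_pos_of_pos hρ0 p)]
          rw [e1, e2, e3, div_eq_mul_inv]
          ring
  -- the quantitative contradiction
  have hstep1 : P3 * (μ (Metric.ball x₀ ρ) / ENNReal.ofReal (ρ ^ p)) / M < qp := by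
    have h1 : P3 * (μ (Metric.ball x₀ ρ) / ENNReal.ofReal (ρ ^ p)) < P3 * ε :=
      (ENNReal.mul_lt_mul_iff_right hP30 hP3top).2 hFρ
    have h2 : P3 * ε = qp * M := by
      rw [hεdef]
      exact ENNReal.mul_div_cancel hP30 hP3top
    calc P3 * (μ (Metric.ball x₀ ρ) / ENNReal.ofReal (ρ ^ p)) / M < (P3 * ε) / M := by
          rw [div_eq_mul_inv, div_eq_mul_inv]
          exact (ENNReal.mul_lt_mul_iff_left (ENNReal.inv_ne_zero.2 hMtop.ne)
            (ENNReal.inv_ne_top.2 hM0.ne')).2 h1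
      _ = qp * M / M := by rw [h2]
      _ = qp := by
          rw [div_eq_mul_inv, mul_assoc, ← div_eq_mul_inv,
            ENNReal.div_self hM0.ne' hMtop.ne, mul_one]
  have hrpow1 : (qp : ℝ≥0∞) ^ (1/p) = q := by
    rw [hqpdef, ← ENNReal.rpow_mul, mul_one_div_cancel hp0.ne', ENNReal.rpow_one]
  have hRHS2 : ENNReal.ofReal (Cp * R) * (⨍⁻ y in Metric.ball x₀ R, gfn y ^ p ∂μ) ^ (1/p)
      ≤ C' * q := by
    rw [← hC'def]
    apply mul_le_mul_right
    rw [← hrpow1]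
    exact ENNReal.rpow_le_rpow (le_trans hRHS hstep1.le) (by positivity)
  have hCq : C' * q < lam := by
    have e1 : C' * q = lam * (C' / (1 + C')) := by
      rw [hqdef, div_eq_mul_inv, div_eq_mul_inv]
      ring
    rw [e1]
    calc lam * (C' / (1 + C')) < lam * 1 := by
          apply (ENNReal.mul_lt_mul_iff_right hlam0.ne' hlamtop).2
          rw [ENNReal.div_lt_iff (Or.inl h1C0) (Or.inl h1Ctop), one_mul]
          calc C' < C' + 1 := ENNReal.lt_add_right hC'top one_ne_zero
            _ = 1 + C' := add_comm _ _
      _ = lam := mul_one _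
  exact absurd (le_trans hLHS (le_trans hPIapp hRHS2)) (not_le.2 hCq)
end
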